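/- Let W be a symmetric doubly-0-astic n×n max-plus matrix and Δ(W) = ⋁_{k=1}^n W^k. Then Δ(W) is idempotent for the max-plus product: Δ(W) ⊗ Δ(W) = Δ(W). Consequently the operators D = δ_{Δ(W)} and E = ε_{Δ(W)} on [a,b]^n are idempotent, D is a closing, E is an opening, and E = D ∘ E. -/

import Mathlib

/-- Max-plus product of a matrix with a real vector: `(W ⊗ x)_i = ⨆ j, w_ij + x_j`. -/
noncomputable def deltaE {n : ℕ} (W : Fin n → Fin n → EReal) (x : Fin n → ℝ) (i : Fin n) : EReal :=
  ⨆ j, W i j + (x j : EReal)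

/-- Min-plus adjoint candidate: `ε_W(y)_i = ⨅ j, y_j - w_ji`. -/
noncomputable def epsE {n : ℕ} (W : Fin n → Fin n → EReal) (y : Fin n → ℝ) (i : Fin n) : EReal :=
  ⨅ j, (y j : EReal) - W j i

/-- Row-0-astic: every row supremum equals 0. -/
def RowAstic {n : ℕ} (W : Fin n → Fin n → EReal) : Prop := ∀ i, (⨆ j, W i j) = 0

/-- Column-0-astic: every column supremum equals 0. -/
def ColAstic {n : ℕ} (W : Fin n → Fin n → EReal) : Prop := ∀ j, (⨆ i, W i j) = 0

/-- Doubly-0-astic. -/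
def DoublyAstic {n : ℕ} (W : Fin n → Fin n → EReal) : Prop := RowAstic W ∧ ColAstic W

/-- Max-plus matrix product. -/
noncomputable def matMul {n : ℕ} (A B : Fin n → Fin n → EReal) : Fin n → Fin n → EReal :=
  fun i j => ⨆ k, A i k + B k j

/-- Max-plus matrix power (`matPow W 0` is the max-plus identity). -/
noncomputable def matPow {n : ℕ} (W : Fin n → Fin n → EReal) : ℕ → (Fin n → Fin n → EReal)
  | 0 => fun i j => if i = j then 0 else ⊥
  | p + 1 => matMul W (matPow W p)

/-- Max-plus product of a matrix with an extended-real vector. -/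
noncomputable def deltaF {n : ℕ} (W : Fin n → Fin n → EReal) (x : Fin n → EReal) (i : Fin n) :
    EReal :=
  ⨆ j, W i j + x j

/-- Adjoint erosion acting on extended-real vectors. -/
noncomputable def epsF {n : ℕ} (W : Fin n → Fin n → EReal) (y : Fin n → EReal) (i : Fin n) :
    EReal :=
  ⨅ j, y j - W j i

section AuxStmt19

open Finset

lemma my_isup_attain {ι : Type*} [Fintype ι] [Nonempty ι] (f : ι → EReal) :
    ∃ k, (⨆ i, f i) = f k := by
  obtain ⟨k, -, hk⟩ := Finset.exists_max_image Finset.univ f ⟨Classical.arbitrary ι, mem_univ _⟩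
  exact ⟨k, le_antisymm (iSup_le fun i => hk i (mem_univ i)) (le_iSup f k)⟩

lemma my_iinf_attain {ι : Type*} [Fintype ι] [Nonempty ι] (f : ι → EReal) :
    ∃ k, (⨅ i, f i) = f k := by
  obtain ⟨k, -, hk⟩ := Finset.exists_min_image Finset.univ f ⟨Classical.arbitrary ι, mem_univ _⟩
  exact ⟨k, le_antisymm (iInf_le f k) (le_iInf fun i => hk i (mem_univ i))⟩

lemma my_bisup_attain (s : Finset ℕ) (hs : s.Nonempty) (f : ℕ → EReal) :
    ∃ k ∈ s, (⨆ i ∈ s, f i) = f k := by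
  obtain ⟨k, hks, hk⟩ := Finset.exists_max_image s f hs
  exact ⟨k, hks, le_antisymm (iSup₂_le fun i hi => hk i hi)
    (le_iSup₂ (f := fun i (_ : i ∈ s) => f i) k hks)⟩

lemma my_add_iSup {ι : Sort*} [Nonempty ι] (c : EReal) (f : ι → EReal) :
    c + ⨆ i, f i = ⨆ i, c + f i := by
  refine le_antisymm ?_ (iSup_le fun i => add_le_add_right (le_iSup f i) c)
  induction c with
  | bot => simp [EReal.bot_add]
  | coe c =>
      have key : ∀ z : EReal, (c : EReal) + (-(c : EReal) + z) = z := fun z => by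
        rw [← add_assoc, ← EReal.coe_neg, ← EReal.coe_add, add_neg_cancel, EReal.coe_zero,
          zero_add]
      have h1 : (⨆ i, f i) ≤ -(c : EReal) + ⨆ i, (c : EReal) + f i := by
        refine iSup_le fun i => ?_
        have h2 : (-(c : EReal)) + ((c : EReal) + f i) = f i := by
          rw [← add_assoc, ← EReal.coe_neg, ← EReal.coe_add, neg_add_cancel, EReal.coe_zero,
            zero_add]
        calc f i = -(c : EReal) + ((c : EReal) + f i) := h2.symm
          _ ≤ -(c : EReal) + ⨆ i, (c : EReal) + f i :=
            add_le_add_right (le_iSup (fun i => (c : EReal) + f i) i) _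
      calc (c : EReal) + ⨆ i, f i
          ≤ (c : EReal) + (-(c : EReal) + ⨆ i, (c : EReal) + f i) := add_le_add_right h1 _
        _ = ⨆ i, (c : EReal) + f i := key _
  | top =>
      rcases eq_or_ne (⨆ i, f i) ⊥ with h | h
      · simp [h, EReal.add_bot]
      · rw [EReal.top_add_of_ne_bot h]
        obtain ⟨i, hi⟩ : ∃ i, f i ≠ ⊥ := by
          by_contra hc
          push_neg at hc
          exact h (by simp [iSup_eq_bot, hc])
        exact le_iSup_of_le i (by rw [EReal.top_add_of_ne_bot hi])

lemma my_lemQ (c u v w : EReal) (hu : u ≤ 0) (hv : v ≤ 0) (h : u + v ≤ w) :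
    c - w ≤ c - u - v := by
  have hvt : v ≠ ⊤ := fun hvt => by simp [hvt] at hv
  have hut : u ≠ ⊤ := fun hut => by simp [hut] at hu
  have hneg : -(u + v) = -u - v := EReal.neg_add (Or.inr hvt) (Or.inl hut)
  have h2 : -w ≤ -u + -v := by
    rw [← sub_eq_add_neg, ← hneg]
    exact EReal.neg_le_neg_iff.mpr h
  calc c - w = c + -w := sub_eq_add_neg c w
    _ ≤ c + (-u + -v) := add_le_add_right h2 c
    _ = (c + -u) + -v := (add_assoc _ _ _).symm
    _ = c - u - v := by rw [← sub_eq_add_neg, ← sub_eq_add_neg]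

lemma my_lemR (c u v w : EReal) (hu : u ≤ 0) (hv : v ≤ 0) (hw : w ≤ 0) (h : w + v ≤ u) :
    v + (c - u) ≤ c - w := by
  induction v with
  | bot => rw [EReal.bot_add]; exact bot_le
  | top => simp at hv
  | coe v =>
    induction u with
    | top => simp at hu
    | bot =>
      have hwb : w = ⊥ := by
        rcases EReal.add_eq_bot_iff.mp (le_bot_iff.mp h) with h' | h'
        · exact h'
        · exact absurd h' (EReal.coe_ne_bot v)
      subst hwb
      induction c with
      | bot => simp [EReal.bot_add, EReal.add_bot, EReal.bot_sub]
      | coe c => rw [EReal.coe_sub_bot, EReal.add_top_of_ne_bot (EReal.coe_ne_bot v)]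
      | top => rw [EReal.top_sub_bot]; exact le_top
    | coe u =>
      induction w with
      | top => simp at hw
      | bot =>
        induction c with
        | bot => simp [EReal.bot_sub, EReal.add_bot]
        | coe c => rw [EReal.coe_sub_bot]; exact le_top
        | top => rw [EReal.top_sub_bot]; exact le_top
      | coe w =>
        induction c with
        | bot => simp [EReal.bot_sub, EReal.add_bot]
        | top => rw [EReal.top_sub_coe]; exact le_top
        | coe c =>
          have h' : w + v ≤ u := by exact_mod_cast h
          have : v + (c - u) ≤ c - w := by linarith
          exact_mod_cast this


noncomputable def pw {n : ℕ} (W : Fin n → Fin n → EReal) (p : ℕ → Fin n) (m : ℕ) : EReal :=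
  ∑ t ∈ Finset.range m, W (p t) (p (t + 1))

lemma pw_le_matPow {n : ℕ} (W : Fin n → Fin n → EReal) :
    ∀ (m : ℕ) (p : ℕ → Fin n), pw W p m ≤ matPow W m (p 0) (p m) := by
  intro m
  induction m with
  | zero => intro p; simp [pw, matPow]
  | succ m ih =>
    intro p
    have h1 : pw W p (m + 1) = W (p 0) (p 1) + pw W (fun t => p (t + 1)) m := by
      rw [pw, Finset.sum_range_succ', add_comm]
      rfl
    rw [h1]
    show _ ≤ matMul W (matPow W m) (p 0) (p (m + 1))
    exact le_iSup_of_le (p 1) (add_le_add_right (ih (fun t => p (t + 1))) _)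

lemma matPow_le_pathSup {n : ℕ} (W : Fin n → Fin n → EReal) (hn : 0 < n) :
    ∀ (m : ℕ) (i j : Fin n), matPow W m i j ≤
      ⨆ (p : ℕ → Fin n), ⨆ (_ : p 0 = i ∧ p m = j), pw W p m := by
  have : Nonempty (Fin n) := ⟨⟨0, hn⟩⟩
  intro m
  induction m with
  | zero =>
    intro i j
    show (if i = j then (0 : EReal) else ⊥) ≤ _
    split_ifs with h
    · subst h
      exact le_iSup₂_of_le (fun _ => i) ⟨rfl, rfl⟩ (by simp [pw])
    · exact bot_le
  | succ m ih =>
    intro i j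
    show matMul W (matPow W m) i j ≤ _
    refine iSup_le fun k => ?_
    calc W i k + matPow W m k j
        ≤ W i k + ⨆ (p : ℕ → Fin n), ⨆ (_ : p 0 = k ∧ p m = j), pw W p m :=
          add_le_add_right (ih k j) _
      _ = ⨆ (p : ℕ → Fin n), W i k + ⨆ (_ : p 0 = k ∧ p m = j), pw W p m :=
          my_add_iSup _ _
      _ ≤ _ := ?_
    refine iSup_le fun p => ?_
    by_cases hp : p 0 = k ∧ p m = j
    · rw [iSup_pos hp]
      set q : ℕ → Fin n := fun t => if t = 0 then i else p (t - 1) with hqdef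
      have e1 : W (q 0) (q (0 + 1)) = W i k := by simp [hqdef, hp.1]
      have e2 : ∀ t ∈ Finset.range m, W (q (t + 1)) (q (t + 1 + 1)) = W (p t) (p (t + 1)) := by
        intro t _
        simp [hqdef]
      have hq : pw W q (m + 1) = W i k + pw W p m := by
        rw [pw, Finset.sum_range_succ', Finset.sum_congr rfl e2, e1, add_comm, pw]
      refine le_iSup₂_of_le q ⟨by simp [hqdef], by simp [hqdef, hp.2]⟩ hq.ge
    · rw [iSup_neg hp, EReal.add_bot]
      exact bot_le

lemma matPow_one_eq {n : ℕ} (W : Fin n → Fin n → EReal) (i j : Fin n) :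
    matPow W 1 i j = W i j := by
  show (⨆ k, W i k + matPow W 0 k j) = W i j
  refine le_antisymm (iSup_le fun k => ?_) ?_
  · show W i k + (if k = j then (0 : EReal) else ⊥) ≤ W i j
    split_ifs with h
    · subst h; rw [add_zero]
    · rw [EReal.add_bot]; exact bot_le
  · refine le_iSup_of_le j ?_
    show W i j ≤ W i j + (if j = j then (0 : EReal) else ⊥)
    rw [if_pos rfl, add_zero]

lemma key_pigeonhole {n : ℕ} (hn : 0 < n) (W : Fin n → Fin n → EReal)
    (hW0 : ∀ i j, W i j ≤ 0)
    (Δ : Fin n → Fin n → EReal)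
    (hΔ : Δ = fun i j => ⨆ k ∈ Finset.Icc 1 n, matPow W k i j)
    (hdiag : ∀ i, Δ i i = 0) :
    ∀ i j, matPow W (n + 1) i j ≤ Δ i j := by
  intro i j
  refine (matPow_le_pathSup W hn (n + 1) i j).trans ?_
  refine iSup_le fun p => iSup_le fun hp => ?_
  -- main argument for a repeat at positions s < t
  have hmain : ∀ s t : ℕ, s < t → t ≤ n + 1 → p s = p t → pw W p (n + 1) ≤ Δ i j := by
    intro s t hst ht hpst
    set d := t - s with hd
    have hd1 : 1 ≤ d := by omega
    have hsd : s + d = t := by omega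
    set m' := n + 1 - d with hm'
    have hm'd : m' + d = n + 1 := by omega
    have hsm' : s ≤ m' := by omega
    set q : ℕ → Fin n := fun u => if u < s then p u else p (u + d) with hqdef
    have hq0 : q 0 = i := by
      by_cases h0 : 0 < s
      · simp only [hqdef, if_pos h0]; exact hp.1
      · have hs0 : s = 0 := by omega
        have : q 0 = p t := by
          simp only [hqdef, hs0]
          rw [if_neg (by omega)]
          congr 1
          omega
        rw [this, ← hpst, hs0]
        exact hp.1
    have hqm : q m' = j := by
      have : q m' = p (m' + d) := by
        simp only [hqdef]
        rw [if_neg (by omega)]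
      rw [this, hm'd]
      exact hp.2
    set w : ℕ → EReal := fun u => W (p u) (p (u + 1)) with hwdef
    have hedge1 : ∀ u ∈ Finset.range s, W (q u) (q (u + 1)) = w u := by
      intro u hu
      have hus : u < s := Finset.mem_range.mp hu
      have hqu : q u = p u := by simp only [hqdef]; rw [if_pos hus]
      by_cases h1 : u + 1 < s
      · have : q (u + 1) = p (u + 1) := by simp only [hqdef]; rw [if_pos h1]
        rw [hqu, this]
      · have hu1 : u + 1 = s := by omega
        have : q (u + 1) = p (u + 1 + d) := by simp only [hqdef]; rw [if_neg (by omega)]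
        rw [hqu, this, show u + 1 + d = t by omega, ← hpst, ← hu1]
    have hedge2 : ∀ u ∈ Finset.Ico s m', W (q u) (q (u + 1)) = w (u + d) := by
      intro u hu
      have hus : s ≤ u := (Finset.mem_Ico.mp hu).1
      have hqu : q u = p (u + d) := by simp only [hqdef]; rw [if_neg (by omega)]
      have hqu1 : q (u + 1) = p (u + d + 1) := by
        simp only [hqdef]
        rw [if_neg (by omega)]
        congr 1
        omega
      rw [hqu, hqu1]
    have hsum_q : pw W q m' = (∑ u ∈ Finset.range s, w u) + ∑ u ∈ Finset.Ico t (n + 1), w u := by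
      rw [pw, ← Finset.sum_range_add_sum_Ico _ hsm']
      congr 1
      · exact Finset.sum_congr rfl hedge1
      · rw [Finset.sum_congr rfl hedge2,
          Finset.sum_Ico_add' w s m' d, hsd, hm'd]
    have hsum_p : pw W p (n + 1) =
        ((∑ u ∈ Finset.range s, w u) + ∑ u ∈ Finset.Ico s t, w u)
          + ∑ u ∈ Finset.Ico t (n + 1), w u := by
      rw [pw, ← Finset.sum_range_add_sum_Ico _ ht, ← Finset.sum_range_add_sum_Ico _ hst.le]
    have hmid : (∑ u ∈ Finset.Ico s t, w u) ≤ 0 := Finset.sum_nonpos fun u _ => hW0 _ _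
    have h1 : pw W p (n + 1) ≤ pw W q m' := by
      rw [hsum_p, hsum_q]
      calc ((∑ u ∈ Finset.range s, w u) + ∑ u ∈ Finset.Ico s t, w u)
            + ∑ u ∈ Finset.Ico t (n + 1), w u
          ≤ ((∑ u ∈ Finset.range s, w u) + 0) + ∑ u ∈ Finset.Ico t (n + 1), w u :=
            add_le_add_left (add_le_add_right hmid _) _
        _ = _ := by rw [add_zero]
    refine h1.trans ?_
    have h2 := pw_le_matPow W m' q
    rw [hq0, hqm] at h2
    refine h2.trans ?_
    by_cases hm0 : m' = 0
    · have hij : i = j := by rw [← hq0, ← hqm, hm0]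
      rw [hm0]
      show (if i = j then (0 : EReal) else ⊥) ≤ Δ i j
      rw [if_pos hij, hij, hdiag j]
    · have hmem : m' ∈ Finset.Icc 1 n := by
        rw [Finset.mem_Icc]
        omega
      rw [hΔ]
      exact le_iSup₂_of_le m' hmem le_rfl
  obtain ⟨x, y, hxy, hpxy⟩ := Fintype.exists_ne_map_eq_of_card_lt
    (fun t : Fin (n + 2) => p t) (by simp)
  rcases hxy.lt_or_gt with hlt | hlt
  · exact hmain x y (by exact_mod_cast hlt) (by omega) hpxy
  · exact hmain y x (by exact_mod_cast hlt) (by omega) hpxy.symm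


end AuxStmt19

/-- for a symmetric doubly-0-astic `W`, the metric matrix
`Δ = Δ(W) = ⋁_{k=1}^n W^k` is max-plus idempotent (`Δ ⊗ Δ = Δ`); consequently, on the
hypercube, `D = δ_Δ` and `E = ε_Δ` are idempotent, `D` is a closing (increasing, extensive,
idempotent), `E` is an opening (increasing, anti-extensive, idempotent), and `E = D ∘ E`. -/
theorem stmt19 (n : ℕ) (hn : 0 < n) (a b : ℝ) (ha : 0 ≤ a) (hab : a < b)
    (W : Fin n → Fin n → EReal) (hsym : ∀ i j, W i j = W j i) (hW : DoublyAstic W)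
    (Δ : Fin n → Fin n → EReal) (hΔ : Δ = fun i j => ⨆ k ∈ Finset.Icc 1 n, matPow W k i j) :
    (matMul Δ Δ = Δ) ∧
    -- D and E are monotone on extended-real vectors
    (∀ x y : Fin n → EReal, x ≤ y → deltaF Δ x ≤ deltaF Δ y) ∧
    (∀ x y : Fin n → EReal, x ≤ y → epsF Δ x ≤ epsF Δ y) ∧
    -- on the hypercube: D extensive and idempotent (a closing), E anti-extensive and
    -- idempotent (an opening), and E = D ∘ E
    (∀ x : Fin n → EReal, (∀ i, (a : EReal) ≤ x i ∧ x i ≤ (b : EReal)) →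
      (x ≤ deltaF Δ x) ∧
      (deltaF Δ (deltaF Δ x) = deltaF Δ x) ∧
      (epsF Δ x ≤ x) ∧
      (epsF Δ (epsF Δ x) = epsF Δ x) ∧
      (deltaF Δ (epsF Δ x) = epsF Δ x)) := by
  have hne : Nonempty (Fin n) := ⟨⟨0, hn⟩⟩
  have hIcc : (Finset.Icc 1 n).Nonempty := ⟨1, by rw [Finset.mem_Icc]; omega⟩
  -- entries nonpositive
  have hW0 : ∀ i j, W i j ≤ 0 := fun i j => (le_iSup (W i) j).trans_eq (hW.1 i)
  have hpow0 : ∀ m i j, matPow W m i j ≤ 0 := by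
    intro m
    induction m with
    | zero =>
      intro i j
      show (if i = j then (0 : EReal) else ⊥) ≤ 0
      split_ifs <;> simp
    | succ m ih =>
      intro i j
      exact iSup_le fun k => add_nonpos (hW0 i k) (ih k j)
  have hDle : ∀ i j, Δ i j ≤ 0 := by
    intro i j
    rw [hΔ]
    exact iSup₂_le fun m _ => hpow0 m i j
  -- diagonal of Δ is 0
  have hdiag : ∀ i, Δ i i = 0 := by
    intro i
    refine le_antisymm (hDle i i) ?_
    obtain ⟨k0, hk0⟩ := my_isup_attain (W i)
    have hk0' : W i k0 = 0 := by rw [← hk0, hW.1 i]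
    rcases Nat.lt_or_ge n 2 with h2 | h2
    · -- n = 1
      have hn1 : n = 1 := by omega
      have hik : i = k0 := by
        apply Fin.ext
        omega
      have h1 : matPow W 1 i i = 0 := by
        rw [matPow_one_eq, hik]
        exact hik ▸ hk0'
      rw [hΔ]
      refine le_trans ?_ (le_iSup₂_of_le 1 (by rw [Finset.mem_Icc]; omega) le_rfl)
      rw [h1]
    · -- n ≥ 2 : use matPow 2
      have h2' : matPow W 2 i i ≥ 0 := by
        show (0 : EReal) ≤ matMul W (matPow W 1) i i
        refine le_iSup_of_le k0 ?_
        rw [matPow_one_eq, hsym k0 i, hk0', add_zero]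
      rw [hΔ]
      exact le_trans h2' (le_iSup₂_of_le 2 (by rw [Finset.mem_Icc]; omega) le_rfl)
  have hkey := key_pigeonhole hn W hW0 Δ hΔ hdiag
  -- lemma M : W i k + Δ k j ≤ Δ i j
  have hM : ∀ i k j, W i k + Δ k j ≤ Δ i j := by
    intro i k j
    obtain ⟨q0, hq0mem, hq0⟩ := my_bisup_attain (Finset.Icc 1 n) hIcc (fun m => matPow W m k j)
    rw [Finset.mem_Icc] at hq0mem
    have e1 : Δ k j = matPow W q0 k j := by rw [hΔ]; exact hq0
    have e2 : W i k + matPow W q0 k j ≤ matPow W (q0 + 1) i j := by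
      show _ ≤ ⨆ m, W i m + matPow W q0 m j
      exact le_iSup_of_le k le_rfl
    rw [e1]
    refine e2.trans ?_
    rcases Nat.lt_or_ge q0 n with hlt | hge
    · rw [hΔ]
      exact le_iSup₂_of_le (q0 + 1) (by rw [Finset.mem_Icc]; omega) le_rfl
    · have : q0 = n := by omega
      rw [this]
      exact hkey i j
  -- lemma L : matPow m i k + Δ k j ≤ Δ i j
  have hL : ∀ m i k j, matPow W m i k + Δ k j ≤ Δ i j := by
    intro m
    induction m with
    | zero =>
      intro i k j
      show (if i = k then (0 : EReal) else ⊥) + Δ k j ≤ Δ i j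
      split_ifs with h
      · rw [zero_add, h]
      · rw [EReal.bot_add]; exact bot_le
    | succ m ih =>
      intro i k j
      obtain ⟨m0, hm0⟩ := my_isup_attain (fun mm => W i mm + matPow W m mm k)
      have e1 : matPow W (m + 1) i k = W i m0 + matPow W m m0 k := hm0
      rw [e1, add_assoc]
      exact le_trans (add_le_add_right (ih m0 k j) _) (hM i m0 j)
  -- Δ ⊗ Δ = Δ
  have hDD : matMul Δ Δ = Δ := by
    funext i j
    refine le_antisymm (iSup_le fun k => ?_) ?_
    · obtain ⟨p0, hp0mem, hp0⟩ := my_bisup_attain (Finset.Icc 1 n) hIcc (fun m => matPow W m i k)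
      have e1 : Δ i k = matPow W p0 i k := by rw [hΔ]; exact hp0
      rw [e1]
      exact hL p0 i k j
    · have h := le_iSup (fun k => Δ i k + Δ k j) j
      rw [hdiag j, add_zero] at h
      exact h
  have htri : ∀ i j k, Δ i j + Δ j k ≤ Δ i k := fun i j k =>
    (le_iSup (fun m => Δ i m + Δ m k) j).trans_eq (congrFun (congrFun hDD i) k)
  -- extensivity of deltaF (any vector)
  have hext : ∀ (x : Fin n → EReal) (i : Fin n), x i ≤ deltaF Δ x i := by
    intro x i
    have h := le_iSup (fun j => Δ i j + x j) i
    rw [hdiag i, zero_add] at h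
    exact h
  refine ⟨hDD, ?_, ?_, ?_⟩
  · intro x y hxy i
    exact iSup_mono fun j => add_le_add_right (hxy j) _
  · intro x y hxy i
    exact iInf_mono fun j => EReal.sub_le_sub (hxy j) le_rfl
  · intro x hx
    refine ⟨fun i => hext x i, ?_, ?_, ?_, ?_⟩
    · -- deltaF idempotent
      funext i
      refine le_antisymm (iSup_le fun j => ?_) (hext (deltaF Δ x) i)
      obtain ⟨k0, hk0⟩ := my_isup_attain (fun k => Δ j k + x k)
      have e1 : deltaF Δ x j = Δ j k0 + x k0 := hk0
      rw [e1, ← add_assoc]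
      exact le_trans (add_le_add_left (htri i j k0) _) (le_iSup (fun k => Δ i k + x k) k0)
    · -- epsF anti-extensive
      intro i
      refine (iInf_le (fun j => x j - Δ j i) i).trans ?_
      rw [hdiag i, sub_eq_add_neg, neg_zero, add_zero]
    · -- epsF idempotent
      funext i
      refine le_antisymm ?_ (le_iInf fun j => ?_)
      · refine (iInf_le (fun j => epsF Δ x j - Δ j i) i).trans ?_
        rw [hdiag i, sub_eq_add_neg, neg_zero, add_zero]
      · obtain ⟨k0, hk0⟩ := my_iinf_attain (fun k => x k - Δ k j)
        have e1 : epsF Δ x j = x k0 - Δ k0 j := hk0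
        rw [e1]
        exact le_trans (iInf_le (fun k => x k - Δ k i) k0)
          (my_lemQ (x k0) (Δ k0 j) (Δ j i) (Δ k0 i) (hDle k0 j) (hDle j i) (htri k0 j i))
    · -- deltaF (epsF x) = epsF x
      funext i
      refine le_antisymm (iSup_le fun j => le_iInf fun k => ?_) (hext (epsF Δ x) i)
      calc Δ i j + epsF Δ x j
          ≤ Δ i j + (x k - Δ k j) := add_le_add_right (iInf_le (fun m => x m - Δ m j) k) _
        _ ≤ x k - Δ k i :=
            my_lemR (x k) (Δ k j) (Δ i j) (Δ k i) (hDle k j) (hDle i j) (hDle k i) (htri k i j)
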